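/- Let X be a nonempty finite type, T ≥ 1, r : X → ℝ a reward, α > 0, and p^pre a positive pretrained policy sequence with soft value functions v_t and soft-optimal policy sequence p*. Then for every positive policy sequence p^θ and every initial distribution μ on X, the entropy-regularized objective J(p^θ) := E_{P^{p^θ}_μ}[r(x_0)] − α · Σ_{t=1}^{T} E_{P^{p^θ}_μ}[KL(p^θ_{t-1}(·|x_t) ‖ p^pre_{t-1}(·|x_t))] satisfies J(p^θ) = Σ_{x_T} μ(x_T) v_T(x_T) − α · Σ_{t=1}^{T} E_{P^{p^θ}_μ}[KL(p^θ_{t-1}(·|x_t) ‖ p*_{t-1}(·|x_t))]; that is, maximizing the PPO objective J is equivalent, up to an additive constant independent of p^θ, to minimizing the expected per-step reverse KL divergence to the soft-optimal policy. -/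

import Mathlib

open Real

/-- KL divergence between two mass functions on a finite type, with the
convention `0 * log 0 = 0` (automatic, since `0 * _ = 0` in `ℝ`). -/
noncomputable def KLd {Y : Type*} [Fintype Y] (p q : Y → ℝ) : ℝ :=
  ∑ y, p y * Real.log (p y / q y)

/-- Product of transition probabilities along a trajectory `(x_{t-1}, …, x_0)`
(encoded as `y : Fin t → X`, with `y i = x_i`) starting from `x_t = x`:
`∏_{s=t}^{1} p_{s-1}(x_{s-1} | x_s)`. -/
noncomputable def chainProd {X : Type*} (p : ℕ → X → X → ℝ) (t : ℕ) (x : X)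
    (y : Fin t → X) : ℝ :=
  ∏ s : Fin t, p s (if h : (s : ℕ) + 1 < t then y ⟨(s : ℕ) + 1, h⟩ else x) (y s)

/-- The soft value functions: `v_0 = r` and, for `t ≥ 1`,
`v_t(x) = α * log ∑_{x_{t-1},…,x_0} (∏_{s=t}^{1} p_{s-1}(x_{s-1}|x_s)) exp(r(x_0)/α)`. -/
noncomputable def softValue {X : Type*} [Fintype X] (p : ℕ → X → X → ℝ) (r : X → ℝ)
    (α : ℝ) : ℕ → X → ℝ
  | 0, x => r x
  | (t + 1), x =>
      α * Real.log (∑ y : Fin (t + 1) → X,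
        chainProd p (t + 1) x y * Real.exp (r (y 0) / α))

/-- The soft-optimal policy
`p*_{t-1}(y|x) = p^pre_{t-1}(y|x) * exp(v_{t-1}(y)/α) / exp(v_t(x)/α)`.
The index `t : ℕ` here stands for `t-1`, so it uses `v_t` and `v_{t+1}`. -/
noncomputable def softOpt {X : Type*} [Fintype X] (p : ℕ → X → X → ℝ) (r : X → ℝ)
    (α : ℝ) (t : ℕ) (x y : X) : ℝ :=
  p t x y * Real.exp (softValue p r α t y / α) / Real.exp (softValue p r α (t + 1) x / α)

/-- The joint trajectory distribution
`P^q_μ(x_T,…,x_0) = μ(x_T) * ∏_{t=T}^{1} q_{t-1}(x_{t-1}|x_t)`, a trajectory being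
encoded as `x : Fin (T+1) → X` with `x i = x_i` (so `x (Fin.last T) = x_T`). -/
noncomputable def trajProb {X : Type*} (μ : X → ℝ) (q : ℕ → X → X → ℝ) (T : ℕ)
    (x : Fin (T + 1) → X) : ℝ :=
  μ (x (Fin.last T)) * ∏ t : Fin T, q t (x t.succ) (x t.castSucc)

/-- Expectation of `f` under the joint trajectory distribution `P^q_μ`. -/
noncomputable def trajExp {X : Type*} [Fintype X] (μ : X → ℝ) (q : ℕ → X → X → ℝ)
    (T : ℕ) (f : (Fin (T + 1) → X) → ℝ) : ℝ :=
  ∑ x : Fin (T + 1) → X, trajProb μ q T x * f x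

/-- `q` is a policy sequence for horizon `T`: for each `t < T` (our index `t`
stands for `t-1` with `1 ≤ t ≤ T`), `q t x ·` is a probability mass function. -/
def IsPolicy {X : Type*} [Fintype X] (T : ℕ) (q : ℕ → X → X → ℝ) : Prop :=
  ∀ t < T, ∀ x : X, (∀ y : X, 0 ≤ q t x y) ∧ (∑ y, q t x y) = 1

/-- A policy sequence is positive if all its transition probabilities are positive. -/
def IsPositive {X : Type*} (T : ℕ) (q : ℕ → X → X → ℝ) : Prop :=
  ∀ t < T, ∀ x y : X, 0 < q t x y

section Aux

variable {X : Type*} [Fintype X]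

lemma sum_pi_cons {n : ℕ} (F : (Fin (n + 1) → X) → ℝ) :
    ∑ x : Fin (n + 1) → X, F x = ∑ v : X, ∑ w : Fin n → X, F (Fin.cons v w) := by
  rw [← (Fin.consEquiv (fun _ : Fin (n + 1) => X)).sum_comp F, Fintype.sum_prod_type]
  rfl

lemma trajProb_cons {n : ℕ} (μ : X → ℝ) (q : ℕ → X → X → ℝ) (v : X) (w : Fin (n + 1) → X) :
    trajProb μ q (n + 1) (Fin.cons v w) =
      trajProb μ (fun s => q (s + 1)) n w * q 0 (w 0) v := by
  unfold trajProb
  rw [Fin.prod_univ_succ]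
  have h1 : (Fin.cons v w : Fin (n + 2) → X) (Fin.last (n + 1)) = w (Fin.last n) := rfl
  have h2 : ∀ i : Fin n,
      q (↑(i.succ)) ((Fin.cons v w : Fin (n + 2) → X) i.succ.succ)
        ((Fin.cons v w : Fin (n + 2) → X) i.succ.castSucc)
        = q (↑i + 1) (w i.succ) (w i.castSucc) := fun i => rfl
  have h3 : (Fin.cons v w : Fin (n + 2) → X) ((0 : Fin (n + 1)).succ) = w 0 := rfl
  have h4 : (Fin.cons v w : Fin (n + 2) → X) ((0 : Fin (n + 1)).castSucc) = v := rfl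
  rw [h1, Finset.prod_congr rfl (fun i _ => h2 i), h3, h4]
  simp only [Fin.val_zero]
  ring

lemma shift_policy {n : ℕ} {q : ℕ → X → X → ℝ} (hq : IsPolicy (n + 1) q) :
    IsPolicy n (fun s => q (s + 1)) := fun t ht x => hq (t + 1) (by omega) x

/-- Reduction of an expectation of a function of the tail. -/
lemma trajExp_tail {n : ℕ} (μ : X → ℝ) (q : ℕ → X → X → ℝ) (hq : IsPolicy (n + 1) q)
    (f : (Fin (n + 1) → X) → ℝ) :
    trajExp μ q (n + 1) (fun x => f (Fin.tail x)) = trajExp μ (fun s => q (s + 1)) n f := by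
  unfold trajExp
  rw [sum_pi_cons (fun x => trajProb μ q (n + 1) x * f (Fin.tail x)), Finset.sum_comm]
  apply Finset.sum_congr rfl
  intro w _
  have : ∀ v : X, trajProb μ q (n + 1) (Fin.cons v w)
        * f (Fin.tail (Fin.cons v w : Fin (n + 2) → X))
      = (trajProb μ (fun s => q (s + 1)) n w * f w) * q 0 (w 0) v := by
    intro v
    have ht : Fin.tail (Fin.cons v w : Fin (n + 2) → X) = w := rfl
    rw [trajProb_cons, ht]; ring
  rw [Finset.sum_congr rfl (fun v _ => this v), ← Finset.mul_sum, (hq 0 (by omega) (w 0)).2,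
    mul_one]

lemma trajExp_last {n : ℕ} (μ : X → ℝ) (q : ℕ → X → X → ℝ) (hq : IsPolicy n q) (g : X → ℝ) :
    trajExp μ q n (fun x => g (x (Fin.last n))) = ∑ z, μ z * g z := by
  induction n generalizing μ q with
  | zero =>
      unfold trajExp
      rw [sum_pi_cons (fun x => trajProb μ q 0 x * g (x (Fin.last 0)))]
      simp [trajProb]
  | succ n ih =>
      have h : (fun x : Fin (n + 2) → X => g (x (Fin.last (n + 1))))
          = fun x => (fun w : Fin (n + 1) → X => g (w (Fin.last n))) (Fin.tail x) := rfl
      rw [h, trajExp_tail μ q hq (fun w : Fin (n + 1) → X => g (w (Fin.last n))),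
        ih μ _ (shift_policy hq)]

lemma trajExp_marg {n : ℕ} (μ : X → ℝ) (q : ℕ → X → X → ℝ) (hq : IsPolicy n q)
    (t : Fin n) (ψ : X → X → ℝ) :
    trajExp μ q n (fun x => ψ (x t.succ) (x t.castSucc))
      = trajExp μ q n (fun x => ∑ z, q t (x t.succ) z * ψ (x t.succ) z) := by
  induction n generalizing μ q ψ with
  | zero => exact t.elim0
  | succ n ih =>
      cases t using Fin.cases with
      | zero =>
          unfold trajExp
          rw [sum_pi_cons (fun x => trajProb μ q (n + 1) x *
            ψ (x (0 : Fin (n+1)).succ) (x (0 : Fin (n+1)).castSucc))]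
          rw [sum_pi_cons (fun x => trajProb μ q (n + 1) x *
            (∑ z, q ↑(0 : Fin (n+1)) (x (0 : Fin (n+1)).succ) z * ψ (x (0 : Fin (n+1)).succ) z))]
          rw [Finset.sum_comm, Finset.sum_comm (γ := X)]
          apply Finset.sum_congr rfl
          intro w _
          have hx1 : ∀ v : X, (Fin.cons v w : Fin (n + 2) → X) ((0 : Fin (n+1)).succ) = w 0 :=
            fun v => rfl
          have hx0 : ∀ v : X, (Fin.cons v w : Fin (n + 2) → X) ((0 : Fin (n+1)).castSucc) = v :=
            fun v => rfl
          have hL : ∀ v : X, trajProb μ q (n + 1) (Fin.cons v w) *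
              ψ ((Fin.cons v w : Fin (n + 2) → X) ((0 : Fin (n+1)).succ))
                ((Fin.cons v w : Fin (n + 2) → X) ((0 : Fin (n+1)).castSucc))
              = trajProb μ (fun s => q (s + 1)) n w * (q 0 (w 0) v * ψ (w 0) v) := by
            intro v; rw [trajProb_cons, hx1, hx0]; ring
          have hR : ∀ v : X, trajProb μ q (n + 1) (Fin.cons v w) *
              (∑ z, q ↑(0 : Fin (n+1)) ((Fin.cons v w : Fin (n + 2) → X) ((0 : Fin (n+1)).succ)) z *
                ψ ((Fin.cons v w : Fin (n + 2) → X) ((0 : Fin (n+1)).succ)) z)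
              = (trajProb μ (fun s => q (s + 1)) n w *
                  (∑ z, q 0 (w 0) z * ψ (w 0) z)) * q 0 (w 0) v := by
            intro v; rw [trajProb_cons, hx1]
            norm_num
            ring
          rw [Finset.sum_congr rfl (fun v _ => hL v),
            Finset.sum_congr rfl (fun v _ => hR v),
            ← Finset.mul_sum, ← Finset.mul_sum, (hq 0 (by omega) (w 0)).2, mul_one]
      | succ j =>
          have e1 : (fun x : Fin (n + 2) → X => ψ (x j.succ.succ) (x j.succ.castSucc))
              = fun x => (fun w : Fin (n+1) → X => ψ (w j.succ) (w j.castSucc)) (Fin.tail x) :=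
            rfl
          have e2 : (fun x : Fin (n + 2) → X =>
                ∑ z, q ↑(j.succ) (x j.succ.succ) z * ψ (x j.succ.succ) z)
              = fun x => (fun w : Fin (n+1) → X =>
                ∑ z, q (↑j + 1) (w j.succ) z * ψ (w j.succ) z) (Fin.tail x) := rfl
          rw [e1, e2, trajExp_tail μ q hq (fun w : Fin (n+1) → X => ψ (w j.succ) (w j.castSucc)),
            trajExp_tail μ q hq (fun w : Fin (n+1) → X =>
                ∑ z, q (↑j + 1) (w j.succ) z * ψ (w j.succ) z),
            ih μ _ (shift_policy hq) j ψ]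

lemma KLd_opt {α : ℝ} (hα : 0 < α) (p q vt : X → ℝ) (c : ℝ)
    (hqpos : ∀ y, 0 < q y) (hppos : ∀ y, 0 < p y) (hp1 : ∑ y, p y = 1) :
    KLd p (fun y => q y * Real.exp (vt y / α) / Real.exp (c / α))
      = KLd p q + (c - ∑ y, p y * vt y) / α := by
  unfold KLd
  have key : ∀ y, p y * Real.log (p y / (q y * Real.exp (vt y / α) / Real.exp (c / α)))
      = p y * Real.log (p y / q y) + (p y * c - p y * vt y) / α := by
    intro y
    have hD : (0 : ℝ) < q y * Real.exp (vt y / α) / Real.exp (c / α) :=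
      div_pos (mul_pos (hqpos y) (Real.exp_pos _)) (Real.exp_pos _)
    rw [Real.log_div (ne_of_gt (hppos y)) (ne_of_gt hD),
      Real.log_div (ne_of_gt (mul_pos (hqpos y) (Real.exp_pos _))) (Real.exp_ne_zero _),
      Real.log_mul (ne_of_gt (hqpos y)) (Real.exp_ne_zero _),
      Real.log_exp, Real.log_exp,
      Real.log_div (ne_of_gt (hppos y)) (ne_of_gt (hqpos y))]
    field_simp
    ring
  rw [Finset.sum_congr rfl (fun y _ => key y), Finset.sum_add_distrib, ← Finset.sum_div,
    Finset.sum_sub_distrib, ← Finset.sum_mul, hp1, one_mul]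

lemma trajExp_add {n : ℕ} (μ : X → ℝ) (q : ℕ → X → X → ℝ) (f g : (Fin (n + 1) → X) → ℝ) :
    trajExp μ q n (fun x => f x + g x) = trajExp μ q n f + trajExp μ q n g := by
  simp [trajExp, mul_add, Finset.sum_add_distrib]

lemma trajExp_sub {n : ℕ} (μ : X → ℝ) (q : ℕ → X → X → ℝ) (f g : (Fin (n + 1) → X) → ℝ) :
    trajExp μ q n (fun x => f x - g x) = trajExp μ q n f - trajExp μ q n g := by
  simp [trajExp, mul_sub, Finset.sum_sub_distrib]

lemma trajExp_div {n : ℕ} (μ : X → ℝ) (q : ℕ → X → X → ℝ) (f : (Fin (n + 1) → X) → ℝ)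
    (c : ℝ) :
    trajExp μ q n (fun x => f x / c) = trajExp μ q n f / c := by
  simp [trajExp, Finset.sum_div, mul_div_assoc]

end Aux

theorem statement0 {X : Type*} [Fintype X] [Nonempty X]
    (T : ℕ) (hT : 1 ≤ T) (r : X → ℝ) (α : ℝ) (hα : 0 < α)
    (ppre : ℕ → X → X → ℝ) (hpre : IsPolicy T ppre) (hprePos : IsPositive T ppre)
    (pθ : ℕ → X → X → ℝ) (hθ : IsPolicy T pθ) (hθPos : IsPositive T pθ)
    (μ : X → ℝ) (hμ0 : ∀ x, 0 ≤ μ x) (hμ1 : (∑ x, μ x) = 1) :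
    trajExp μ pθ T (fun x => r (x 0))
        - α * ∑ t : Fin T, trajExp μ pθ T (fun x =>
            KLd (fun y => pθ t (x t.succ) y) (fun y => ppre t (x t.succ) y))
      = (∑ x, μ x * softValue ppre r α T x)
        - α * ∑ t : Fin T, trajExp μ pθ T (fun x =>
            KLd (fun y => pθ t (x t.succ) y) (fun y => softOpt ppre r α t (x t.succ) y)) := by
  have hα' : α ≠ 0 := ne_of_gt hα
  set v : ℕ → X → ℝ := softValue ppre r α with hv
  set F : ℕ → ℝ := fun m => trajExp μ pθ T
    (fun x => v m (x ⟨min m T, Nat.lt_succ_of_le (min_le_right m T)⟩)) with hF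
  -- per-step KL decomposition
  have hsumKL : ∀ t : Fin T,
      trajExp μ pθ T (fun x =>
        KLd (fun y => pθ t (x t.succ) y) (fun y => softOpt ppre r α t (x t.succ) y))
      = trajExp μ pθ T (fun x =>
          KLd (fun y => pθ t (x t.succ) y) (fun y => ppre t (x t.succ) y))
        + (trajExp μ pθ T (fun x => v (↑t + 1) (x t.succ))
            - trajExp μ pθ T (fun x => v ↑t (x t.castSucc))) / α := by
    intro t
    have step1 : (fun x : Fin (T + 1) → X =>
        KLd (fun y => pθ t (x t.succ) y) (fun y => softOpt ppre r α t (x t.succ) y))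
        = fun x => KLd (fun y => pθ t (x t.succ) y) (fun y => ppre t (x t.succ) y)
            + (v (↑t + 1) (x t.succ) - ∑ z, pθ t (x t.succ) z * v ↑t z) / α := by
      funext x
      have := KLd_opt (X := X) hα (fun y => pθ t (x t.succ) y) (fun y => ppre t (x t.succ) y)
        (fun y => v ↑t y) (v (↑t + 1) (x t.succ))
        (fun y => hprePos t t.2 _ y) (fun y => hθPos t t.2 _ y) ((hθ t t.2 _).2)
      simpa [softOpt, hv] using this
    rw [step1, trajExp_add, trajExp_div, trajExp_sub]
    have hmarg := trajExp_marg μ pθ hθ t (fun _ b => v ↑t b)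
    rw [← hmarg]
  -- telescoping
  have htel : ∑ t : Fin T, (trajExp μ pθ T (fun x => v (↑t + 1) (x t.succ))
        - trajExp μ pθ T (fun x => v ↑t (x t.castSucc))) = F T - F 0 := by
    rw [← Finset.sum_range_sub F T, ← Fin.sum_univ_eq_sum_range (fun i => F (i + 1) - F i) T]
    apply Finset.sum_congr rfl
    intro t _
    have h1 : (⟨min (↑t + 1) T, Nat.lt_succ_of_le (min_le_right _ T)⟩ : Fin (T + 1)) = t.succ := by
      apply Fin.ext
      have := t.isLt
      simp [Fin.val_succ]
    have h2 : (⟨min (↑t : ℕ) T, Nat.lt_succ_of_le (min_le_right _ T)⟩ : Fin (T + 1))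
        = t.castSucc := by
      apply Fin.ext
      have := t.isLt
      simp only [Fin.coe_castSucc]
      omega
    rw [hF]
    simp only []
    rw [h1, h2]
  have hFT : F T = ∑ z, μ z * v T z := by
    rw [hF]
    simp only []
    have h1 : (⟨min T T, Nat.lt_succ_of_le (min_le_right T T)⟩ : Fin (T + 1)) = Fin.last T := by
      apply Fin.ext; simp
    rw [h1]
    exact trajExp_last μ pθ hθ (v T)
  have hF0 : F 0 = trajExp μ pθ T (fun x => r (x 0)) := by
    rw [hF]
    simp only []
    congr 1
  have hmain : ∑ t : Fin T, trajExp μ pθ T (fun x =>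
        KLd (fun y => pθ t (x t.succ) y) (fun y => softOpt ppre r α t (x t.succ) y))
      = (∑ t : Fin T, trajExp μ pθ T (fun x =>
          KLd (fun y => pθ t (x t.succ) y) (fun y => ppre t (x t.succ) y)))
        + ((∑ z, μ z * v T z) - trajExp μ pθ T (fun x => r (x 0))) / α := by
    rw [Finset.sum_congr rfl (fun t _ => hsumKL t), Finset.sum_add_distrib, ← Finset.sum_div,
      htel, hFT, hF0]
  rw [hmain]
  rw [hv] at *
  field_simp
  ring
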